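/- For every real number c > 1, the series Σ_{i=0}^{∞} [ i(i+1)/c^{2i−1} + (i+1)²/c^{2i} ] converges and its sum equals c⁴ / ((c−1)³ (c+1)). -/

import Mathlib

theorem stmt14 (c : ℝ) (hc : 1 < c) :
    HasSum
      (fun i : ℕ =>
        (i : ℝ) * ((i : ℝ) + 1) / c ^ (2 * (i : ℤ) - 1) +
          ((i : ℝ) + 1) ^ 2 / c ^ (2 * (i : ℤ)))
      (c ^ 4 / ((c - 1) ^ 3 * (c + 1))) := by
  have hc0 : (0:ℝ) < c := lt_trans one_pos hc
  have hcne : c ≠ 0 := ne_of_gt hc0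
  set r : ℝ := 1 / c ^ 2 with hrdef
  have hr : ‖r‖ < 1 := by
    rw [Real.norm_eq_abs, abs_of_pos (by positivity)]
    rw [div_lt_one (by positivity)]
    nlinarith
  have h1 := hasSum_choose_mul_geometric_of_norm_lt_one 2 hr
  have h2 := hasSum_choose_mul_geometric_of_norm_lt_one 1 hr
  have h := (h1.mul_left (2*(c+1))).sub (h2.mul_left (2*c+1))
  have hrne : (1:ℝ) - r ≠ 0 := by
    have : r < 1 := lt_of_abs_lt (by rwa [Real.norm_eq_abs] at hr)
    linarith
  convert h using 1
  · rfl
  · funext i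
    have e0 : c ^ (2 * (i:ℤ)) = (c ^ 2) ^ i := by
      rw [show 2 * (i:ℤ) = ((2*i : ℕ) : ℤ) by push_cast; ring, zpow_natCast, pow_mul]
    have e1 : c ^ (2 * (i:ℤ) - 1) = (c ^ 2) ^ i / c := by
      rw [zpow_sub₀ hcne, zpow_one, e0]
    have hch2 : ((i+2).choose 2 : ℝ) = (i+1) * (i+2) / 2 := by
      rw [Nat.cast_choose_two]; push_cast; ring
    have hch1 : ((i+1).choose 1 : ℝ) = (i+1) := by simp
    rw [e0, e1, hch2, hch1, hrdef]
    have hc2 : (c:ℝ)^2 ≠ 0 := by positivity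
    have hp : ((c:ℝ)^2)^i ≠ 0 := pow_ne_zero _ hc2
    rw [div_pow, one_pow]
    field_simp
    ring
  · rw [hrdef]
    have h1 : (1:ℝ) - 1/c^2 = (c^2 - 1)/c^2 := by field_simp
    have hce : c^2 - 1 = (c-1)*(c+1) := by ring
    have hne1 : c - 1 ≠ 0 := by intro h; nlinarith
    have hne2 : c + 1 ≠ 0 := by positivity
    rw [h1, hce]
    norm_num only [div_pow, one_div_div]
    field_simp
    ring
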